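/- Let X be a Banach space and S, T : X → X bounded operators such that: ℓ_1 does not embed into X; every weakly null sequence in X either is norm null, or admits a c_0 spreading model, or admits an ℓ_1 spreading model; S maps every sequence generating a c_0 spreading model to a norm-null sequence; and S maps every sequence generating an ℓ_1 spreading model to a sequence not admitting an ℓ_1 spreading model (so, after passing to a subsequence, either norm null or generating a c_0 spreading model); and T satisfies the same two properties. Then the composition TS maps every weakly null sequence to a norm-null sequence, and hence TS is a compact operator. -/

import Mathlib

open Filter Topology

variable {X : Type*} [NormedAddCommGroup X] [NormedSpace ℝ X]

/-- A sequence is norm null if `‖x_k‖ → 0`. -/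
def NormNull (x : ℕ → X) : Prop :=
  Tendsto (fun k => ‖x k‖) atTop (nhds 0)

/-- A sequence is weakly null if `f (x_k) → 0` for every bounded functional. -/
def WeaklyNull (x : ℕ → X) : Prop :=
  ∀ f : X →L[ℝ] ℝ, Tendsto (fun k => f (x k)) atTop (nhds 0)

/-- `(x_k)` generates a `c₀` spreading model. -/
def GeneratesC0SM (x : ℕ → X) : Prop :=
  ∃ C : ℝ, 1 ≤ C ∧ ∀ (n : ℕ) (k : ℕ → ℕ), StrictMono k → n ≤ k 0 →
    ∀ a : ℕ → ℝ,
      ‖∑ i ∈ Finset.range n, a i • x (k i)‖ ≤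
          C * (⨆ i ∈ Finset.range n, |a i|) ∧
      (⨆ i ∈ Finset.range n, |a i|) ≤
          C * ‖∑ i ∈ Finset.range n, a i • x (k i)‖

/-- `(x_k)` generates an `ℓ₁` spreading model. -/
def GeneratesL1SM (x : ℕ → X) : Prop :=
  ∃ C : ℝ, 1 ≤ C ∧ ∀ (n : ℕ) (k : ℕ → ℕ), StrictMono k → n ≤ k 0 →
    ∀ a : ℕ → ℝ,
      ‖∑ i ∈ Finset.range n, a i • x (k i)‖ ≤
          C * ∑ i ∈ Finset.range n, |a i| ∧
      C⁻¹ * ∑ i ∈ Finset.range n, |a i| ≤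
          ‖∑ i ∈ Finset.range n, a i • x (k i)‖

/-- `(x_k)` admits a `c₀` spreading model. -/
def AdmitsC0SM (x : ℕ → X) : Prop :=
  ∃ φ : ℕ → ℕ, StrictMono φ ∧ GeneratesC0SM (fun k => x (φ k))

/-- `(x_k)` admits an `ℓ₁` spreading model. -/
def AdmitsL1SM (x : ℕ → X) : Prop :=
  ∃ φ : ℕ → ℕ, StrictMono φ ∧ GeneratesL1SM (fun k => x (φ k))

/-- `ℓ₁` embeds into `X` if there is an into-isomorphism from `ℓ₁`. -/
def L1Embeds (X : Type*) [NormedAddCommGroup X] [NormedSpace ℝ X] : Prop :=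
  ∃ (f : lp (fun _ : ℕ => ℝ) 1 →L[ℝ] X) (c : ℝ), 0 < c ∧
    ∀ v, c * ‖v‖ ≤ ‖f v‖

namespace RosAux

variable {K : Type*}

/-- `P` holds for arbitrarily large indices. -/
def InfOn (P : ℕ → Prop) : Prop := ∀ N, ∃ i, N ≤ i ∧ P i

theorem infOn_of_infinite {s : Set ℕ} (hs : s.Infinite) : InfOn (fun i => i ∈ s) := by
  intro N
  by_contra h
  push_neg at h
  exact hs (Set.Finite.subset (Set.finite_Iio N) (fun i hi => by
    by_contra hlt
    exact h i (not_lt.mp (fun hc : i < N => hlt hc)) hi))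

theorem InfOn.exists_strictMono {P : ℕ → Prop} (h : InfOn P) :
    ∃ ι : ℕ → ℕ, StrictMono ι ∧ ∀ m, P (ι m) := by
  have hnext : ∀ N : ℕ, ∃ i, N ≤ i ∧ P i := h
  choose next hle hP using hnext
  refine ⟨fun m => Nat.rec (next 0) (fun _ prev => next (prev + 1)) m,
    strictMono_nat_of_lt_succ (fun m => ?_), fun m => ?_⟩
  · exact lt_of_lt_of_le (Nat.lt_succ_self _) (hle _)
  · cases m with
    | zero => exact hP 0
    | succ m => exact hP _

/-- Membership in `A n` (if `b`) or `B n` (if `¬ b`). -/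
def ESet (A B : ℕ → Set K) (n : ℕ) (b : Bool) : Set K := if b then A n else B n

/-- Intersection of the first `k` prescribed `A`/`B` sets. -/
def DSet (A B : ℕ → Set K) (k : ℕ) (t : ℕ → ℕ) (ε : ℕ → Bool) : Set K :=
  {f | ∀ i, i < k → f ∈ ESet A B (t i) (ε i)}

/-- `f` hits both `A (g i)` and `B (g i)` for arbitrarily large `i`. -/
def OscIn (A B : ℕ → Set K) (g : ℕ → ℕ) (f : K) : Prop :=
  InfOn (fun i => f ∈ A (g i)) ∧ InfOn (fun i => f ∈ B (g i))

/-- Hereditarily, along every subsequence of `g`, some member of `D` oscillates. -/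
def HOsc (A B : ℕ → Set K) (D : Set K) (g : ℕ → ℕ) : Prop :=
  ∀ σ : ℕ → ℕ, StrictMono σ → ∃ f ∈ D, OscIn A B (g ∘ σ) f

def Alive (A B : ℕ → Set K) (k : ℕ) (t : ℕ → ℕ) (g : ℕ → ℕ) : Prop :=
  ∀ ε : ℕ → Bool, HOsc A B (DSet A B k t ε) g

theorem OscIn.transfer {A B : ℕ → Set K} {h₁ h₂ : ℕ → ℕ} {f : K} {N₀ : ℕ}
    (hosc : OscIn A B h₁ f) (h₁m : StrictMono h₁) (h₂m : StrictMono h₂)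
    (hsub : ∀ m, N₀ ≤ m → ∃ p, h₁ m = h₂ p) :
    OscIn A B h₂ f := by
  constructor
  · intro N
    obtain ⟨m, hm, hPm⟩ := hosc.1 (max (h₂ N) N₀)
    obtain ⟨p, hp⟩ := hsub m (le_trans (le_max_right _ _) hm)
    refine ⟨p, ?_, show f ∈ A (h₂ p) from hp ▸ hPm⟩
    have : h₂ N ≤ h₂ p := by
      rw [← hp]
      exact le_trans (le_trans (le_max_left _ _) hm) (h₁m.le_apply)
    exact (h₂m.le_iff_le).mp this
  · intro N
    obtain ⟨m, hm, hPm⟩ := hosc.2 (max (h₂ N) N₀)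
    obtain ⟨p, hp⟩ := hsub m (le_trans (le_max_right _ _) hm)
    refine ⟨p, ?_, show f ∈ B (h₂ p) from hp ▸ hPm⟩
    have : h₂ N ≤ h₂ p := by
      rw [← hp]
      exact le_trans (le_trans (le_max_left _ _) hm) (h₁m.le_apply)
    exact (h₂m.le_iff_le).mp this

end RosAux

namespace RosAux

variable {K : Type*}

theorem alive_extend {A B : ℕ → Set K} {k : ℕ} {t g : ℕ → ℕ}
    (hg : StrictMono g) (hAl : Alive A B k t g) :
    ∃ (v : ℕ) (g' : ℕ → ℕ), StrictMono g' ∧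
      Alive A B (k + 1) (Function.update t k v) g' := by
  classical
  by_contra hcon
  push_neg at hcon
  have hstep : ∀ c : ℕ → ℕ, StrictMono c →
      ∃ (ε : ℕ → Bool) (c' : ℕ → ℕ), StrictMono c' ∧ (∀ m, ∃ p, c' m = c p) ∧
        (∀ m, c 0 < c' m) ∧
        ∀ f ∈ DSet A B (k + 1) (Function.update t k (g (c 0))) ε,
          ¬ OscIn A B (g ∘ c') f := by
    intro c hc
    have h1 := hcon (g (c 0)) (fun m => g (c (m + 1)))
      (hg.comp (fun a b hab => hc (Nat.succ_lt_succ hab)))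
    simp only [Alive, HOsc, not_forall] at h1
    obtain ⟨ε, hε⟩ := h1
    push_neg at hε
    obtain ⟨σ, hσ, hkill⟩ := hε
    refine ⟨ε, fun m => c (σ m + 1),
      hc.comp (fun a b hab => Nat.succ_lt_succ (hσ hab)),
      fun m => ⟨σ m + 1, rfl⟩,
      fun m => hc (Nat.succ_pos _),
      fun f hf hosc => hkill f hf ?_⟩
    exact hosc
  choose ε c' hmono hsub hlt hkill using hstep
  let Chain : ℕ → {c : ℕ → ℕ // StrictMono c} := fun j =>
    Nat.rec (motive := fun _ => {c : ℕ → ℕ // StrictMono c})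
      ⟨id, strictMono_id⟩ (fun _ prev => ⟨c' prev.1 prev.2, hmono prev.1 prev.2⟩) j
  have chain_succ : ∀ j, (Chain (j + 1)).1 = c' (Chain j).1 (Chain j).2 := fun _ => rfl
  set n : ℕ → ℕ := fun j => (Chain j).1 0 with hn
  have chain_sub : ∀ j j', j ≤ j' → ∀ m, ∃ p, (Chain j').1 m = (Chain j).1 p := by
    intro j j' hle
    induction j', hle using Nat.le_induction with
    | base => exact fun m => ⟨m, rfl⟩
    | succ j' hle ih =>
      intro m
      obtain ⟨q, hq⟩ := hsub (Chain j').1 (Chain j').2 m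
      obtain ⟨p, hp⟩ := ih q
      exact ⟨p, by rw [chain_succ] at *; rw [hq, hp]⟩
  have n_mono : StrictMono n := by
    apply strictMono_nat_of_lt_succ
    intro j
    have := hlt (Chain j).1 (Chain j).2 0
    simpa [hn, chain_succ] using this
  have kill : ∀ j, ∀ f ∈ DSet A B (k + 1)
      (Function.update t k (g (n j))) (ε (Chain j).1 (Chain j).2),
      ¬ OscIn A B (g ∘ (Chain (j + 1)).1) f := by
    intro j
    have := hkill (Chain j).1 (Chain j).2
    rw [chain_succ]
    exact this
  let cls : ℕ → ((Fin k → Bool) × Bool) := fun j =>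
    (fun i => ε (Chain j).1 (Chain j).2 i.1, ε (Chain j).1 (Chain j).2 k)
  obtain ⟨y, hy⟩ := Finite.exists_infinite_fiber cls
  have hyinf : (cls ⁻¹' {y}).Infinite := Set.infinite_coe_iff.mp hy
  obtain ⟨ι, hι, hιy⟩ := (infOn_of_infinite hyinf).exists_strictMono
  have hιy' : ∀ m, cls (ι m) = y := fun m => hιy m
  set ee : ℕ → Bool := fun i => if h : i < k then y.1 ⟨i, h⟩ else y.2 with hee
  obtain ⟨f, hfD, hfosc⟩ := hAl ee (fun m => n (ι m)) (n_mono.comp hι)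
  have hbside : ∃ m, f ∈ ESet A B (g (n (ι m))) y.2 := by
    cases hb : y.2 with
    | true =>
      obtain ⟨m, _, hm⟩ := hfosc.1 0
      exact ⟨m, by simpa [ESet] using hm⟩
    | false =>
      obtain ⟨m, _, hm⟩ := hfosc.2 0
      exact ⟨m, by simpa [ESet] using hm⟩
  obtain ⟨m, hmem⟩ := hbside
  set j := ι m with hj
  have hclsj : cls j = y := hιy' m
  have hfD' : f ∈ DSet A B (k + 1)
      (Function.update t k (g (n j))) (ε (Chain j).1 (Chain j).2) := by
    intro i hi
    rcases Nat.lt_succ_iff_lt_or_eq.mp hi with hik | hik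
    · have h1 : Function.update t k (g (n j)) i = t i :=
        Function.update_of_ne (Nat.ne_of_lt hik) _ _
      have h2 : ε (Chain j).1 (Chain j).2 i = ee i := by
        have hfst : (fun i : Fin k => ε (Chain j).1 (Chain j).2 i.1) = y.1 :=
          congrArg Prod.fst hclsj
        have := congrFun hfst ⟨i, hik⟩
        rw [hee]
        simp only [dif_pos hik]
        exact this
      rw [h1, h2]
      exact hfD i hik
    · rw [hik, Function.update_self]
      have h2 : ε (Chain j).1 (Chain j).2 k = y.2 := congrArg Prod.snd hclsj
      rw [h2]
      exact hmem
  have hosc' : OscIn A B (g ∘ (Chain (j + 1)).1) f := by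
    refine hfosc.transfer (N₀ := m + 1) (hg.comp (n_mono.comp hι))
      (hg.comp (Chain (j + 1)).2) ?_
    intro m' hm'
    have hjm : j + 1 ≤ ι m' := by
      have : ι m < ι m' := hι (Nat.lt_of_succ_le hm')
      omega
    obtain ⟨p, hp⟩ := chain_sub (j + 1) (ι m') hjm 0
    exact ⟨p, congrArg g hp⟩
  exact kill j f hfD' hosc'

end RosAux

namespace RosAux

variable {K : Type*}

theorem exists_indep {A B : ℕ → Set K} {g₀ : ℕ → ℕ} (hg₀ : StrictMono g₀)
    (hbase : ∀ σ : ℕ → ℕ, StrictMono σ → ∃ f, OscIn A B (g₀ ∘ σ) f) :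
    ∃ nn : ℕ → ℕ, ∀ (N : ℕ) (ε : ℕ → Bool), ∃ f, ∀ i, i < N →
      f ∈ ESet A B (nn i) (ε i) := by
  classical
  have hAl0 : Alive A B 0 id g₀ := by
    intro ε σ hσ
    obtain ⟨f, hf⟩ := hbase σ hσ
    exact ⟨f, fun i hi => absurd hi (Nat.not_lt_zero i), hf⟩
  set Q : ℕ → ((ℕ → ℕ) × (ℕ → ℕ)) → Prop :=
    fun k s => StrictMono s.2 ∧ Alive A B k s.1 s.2 with hQdef
  have hstep : ∀ (k : ℕ) (s : (ℕ → ℕ) × (ℕ → ℕ)), Q k s →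
      ∃ s', Q (k + 1) s' ∧ ∀ i, i ≠ k → s'.1 i = s.1 i := by
    intro k s hs
    obtain ⟨v, g', hg', hAl'⟩ := alive_extend hs.1 hs.2
    exact ⟨(Function.update s.1 k v, g'), ⟨hg', hAl'⟩,
      fun i hi => Function.update_of_ne hi _ _⟩
  choose stf hQst hagree using hstep
  let St : (k : ℕ) → {s : (ℕ → ℕ) × (ℕ → ℕ) // Q k s} := fun k =>
    Nat.rec (motive := fun k => {s // Q k s}) ⟨(id, g₀), hg₀, hAl0⟩
      (fun k prev => ⟨stf k prev.1 prev.2, hQst k prev.1 prev.2⟩) k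
  set nn : ℕ → ℕ := fun i => (St (i + 1)).1.1 i with hnn
  have stab : ∀ i k, i < k → (St k).1.1 i = nn i := by
    intro i k hik
    have hik' : i + 1 ≤ k := hik
    induction k, hik' using Nat.le_induction with
    | base => rfl
    | succ k hk ih =>
      have h1 : (St (k + 1)).1.1 i = (St k).1.1 i :=
        hagree k (St k).1 (St k).2 i (by omega)
      rw [h1, ih (by omega)]
  refine ⟨nn, fun N ε => ?_⟩
  obtain ⟨f, hfD, -⟩ := (St N).2.2 ε id strictMono_id
  refine ⟨f, fun i hi => ?_⟩
  have := hfD i hi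
  rwa [stab i N hi] at this

end RosAux

namespace RosAux

variable {X : Type*} [NormedAddCommGroup X] [NormedSpace ℝ X]

set_option maxHeartbeats 1000000 in
theorem step1 (v : ℕ → X) (hv : ∀ k, ‖v k‖ ≤ 1)
    (hnwc : ∀ h : ℕ → ℕ, StrictMono h → ∃ f : X →L[ℝ] ℝ,
      ¬ ∃ L, Tendsto (fun i => f (v (h i))) atTop (𝓝 L)) :
    ∃ (r s : ℝ), r < s ∧ ∃ g₀ : ℕ → ℕ, StrictMono g₀ ∧
      ∀ σ : ℕ → ℕ, StrictMono σ → ∃ f : X →L[ℝ] ℝ, ‖f‖ ≤ 1 ∧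
        InfOn (fun i => f (v (g₀ (σ i))) < r) ∧
        InfOn (fun i => s < f (v (g₀ (σ i)))) := by
  classical
  by_contra hcon
  push_neg at hcon
  -- enumeration of rational pairs
  set e : ℕ → ℚ × ℚ := fun n => (Denumerable.eqv (ℚ × ℚ)).symm n with he
  have hesurj : Function.Surjective e := (Denumerable.eqv (ℚ × ℚ)).symm.surjective
  have hstep : ∀ (j : ℕ) (c : ℕ → ℕ), StrictMono c →
      ∃ c' : ℕ → ℕ, StrictMono c' ∧ (∀ m, ∃ p, c' m = c p) ∧ (∀ m, c m ≤ c' m) ∧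
        (((e j).1 : ℝ) < ((e j).2 : ℝ) → ∀ f : X →L[ℝ] ℝ, ‖f‖ ≤ 1 →
          ¬ (InfOn (fun m => f (v (c' m)) < ((e j).1 : ℝ)) ∧
             InfOn (fun m => ((e j).2 : ℝ) < f (v (c' m))))) := by
    intro j c hc
    by_cases hlt : ((e j).1 : ℝ) < ((e j).2 : ℝ)
    · obtain ⟨σ, hσ, hkill⟩ := hcon ((e j).1 : ℝ) ((e j).2 : ℝ) hlt c hc
      refine ⟨c ∘ σ, hc.comp hσ, fun m => ⟨σ m, rfl⟩,
        fun m => hc.monotone (hσ.le_apply), fun _ f hf hosc => ?_⟩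
      exact hkill f hf hosc.1 hosc.2
    · exact ⟨c, hc, fun m => ⟨m, rfl⟩, fun m => le_rfl, fun h => absurd h hlt⟩
  choose stf hmono hsub hle hkill using hstep
  let C : ℕ → {c : ℕ → ℕ // StrictMono c} := fun j =>
    Nat.rec (motive := fun _ => {c : ℕ → ℕ // StrictMono c}) ⟨id, strictMono_id⟩
      (fun j prev => ⟨stf j prev.1 prev.2, hmono j prev.1 prev.2⟩) j
  have chain_succ : ∀ j, (C (j + 1)).1 = stf j (C j).1 (C j).2 := fun _ => rfl
  have chain_sub : ∀ j j', j ≤ j' → ∀ m, ∃ p, (C j').1 m = (C j).1 p := by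
    intro j j' hlt'
    induction j', hlt' using Nat.le_induction with
    | base => exact fun m => ⟨m, rfl⟩
    | succ j' hle' ih =>
      intro m
      obtain ⟨q, hq⟩ := hsub j' (C j').1 (C j').2 m
      obtain ⟨p, hp⟩ := ih q
      exact ⟨p, by rw [chain_succ, hq, hp]⟩
  set h : ℕ → ℕ := fun j => (C (j + 1)).1 j with hh
  have hmonoh : StrictMono h := by
    apply strictMono_nat_of_lt_succ
    intro j
    have h1 : (C (j + 1)).1 (j + 1) ≤ (C (j + 2)).1 (j + 1) := by
      rw [chain_succ (j + 1)]
      exact hle (j + 1) (C (j + 1)).1 (C (j + 1)).2 (j + 1)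
    exact lt_of_lt_of_le ((C (j + 1)).2 (Nat.lt_succ_self j)) h1
  have htrans : ∀ (j : ℕ) (P : ℕ → Prop), InfOn (fun i => P (h i)) →
      InfOn (fun p => P ((C (j + 1)).1 p)) := by
    intro j P hP N
    obtain ⟨i, hi, hPi⟩ := hP (max ((C (j + 1)).1 N) (j + 1))
    obtain ⟨p, hp⟩ := chain_sub (j + 1) (i + 1) (by omega) i
    refine ⟨p, ?_, by show P ((C (j + 1)).1 p); rw [← hp]; exact hPi⟩
    have h1 : (C (j + 1)).1 N ≤ (C (j + 1)).1 p := by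
      rw [← hp]
      calc (C (j + 1)).1 N ≤ i := le_trans (le_max_left _ _) hi
        _ ≤ h i := hmonoh.le_apply
        _ = (C (i + 1)).1 i := rfl
    exact ((C (j + 1)).2.le_iff_le).mp h1
  -- every bounded functional converges along h
  have hconv : ∀ f : X →L[ℝ] ℝ, ‖f‖ ≤ 1 →
      ∃ L, Tendsto (fun i => f (v (h i))) atTop (𝓝 L) := by
    intro f hf
    set u : ℕ → ℝ := fun i => f (v (h i)) with hu
    have hub : ∀ i, |u i| ≤ 1 := by
      intro i
      calc |u i| ≤ ‖f‖ * ‖v (h i)‖ := f.le_opNorm _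
        _ ≤ 1 * 1 := by
            apply mul_le_mul hf (hv _) (norm_nonneg _) (le_trans (norm_nonneg _) hf)
        _ = 1 := one_mul 1
    have hbdd : IsBoundedUnder (· ≤ ·) atTop u :=
      isBoundedUnder_of ⟨1, fun i => (abs_le.mp (hub i)).2⟩
    have hbdd' : IsBoundedUnder (· ≥ ·) atTop u :=
      isBoundedUnder_of ⟨-1, fun i => (abs_le.mp (hub i)).1⟩
    rcases eq_or_lt_of_le (liminf_le_limsup hbdd hbdd') with heq | hlt
    · exact ⟨limsup u atTop, tendsto_of_liminf_eq_limsup heq rfl hbdd hbdd'⟩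
    · exfalso
      obtain ⟨q1, hq1a, hq1b⟩ := exists_rat_btwn hlt
      obtain ⟨q2, hq2a, hq2b⟩ := exists_rat_btwn hq1b
      obtain ⟨j, hj⟩ := hesurj (q1, q2)
      have hje1 : ((e j).1 : ℝ) = (q1 : ℝ) := by rw [hj]
      have hje2 : ((e j).2 : ℝ) = (q2 : ℝ) := by rw [hj]
      have hfr1 : InfOn (fun i => u i < (q1 : ℝ)) := by
        have := frequently_lt_of_liminf_lt hbdd.isCoboundedUnder_ge hq1a
        intro N
        obtain ⟨i, hi1, hi2⟩ := frequently_atTop.mp this N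
        exact ⟨i, hi1, hi2⟩
      have hfr2 : InfOn (fun i => (q2 : ℝ) < u i) := by
        have := frequently_lt_of_lt_limsup hbdd'.isCoboundedUnder_le hq2b
        intro N
        obtain ⟨i, hi1, hi2⟩ := frequently_atTop.mp this N
        exact ⟨i, hi1, hi2⟩
      have hk := hkill j (C j).1 (C j).2 (by rw [hje1, hje2]; exact hq2a) f hf
      rw [← chain_succ] at hk
      apply hk
      constructor
      · have := htrans j (fun n => f (v n) < (q1 : ℝ)) hfr1
        rw [hje1]
        exact this
      · have := htrans j (fun n => (q2 : ℝ) < f (v n)) hfr2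
        rw [hje2]
        exact this
  obtain ⟨f, hnc⟩ := hnwc h hmonoh
  apply hnc
  set c : ℝ := ‖f‖ + 1 with hc
  have hcpos : 0 < c := by positivity
  set f1 : X →L[ℝ] ℝ := c⁻¹ • f with hf1
  have hf1n : ‖f1‖ ≤ 1 := by
    rw [hf1]
    calc ‖c⁻¹ • f‖ ≤ ‖c⁻¹‖ * ‖f‖ := ContinuousLinearMap.opNorm_smul_le _ _
      _ = c⁻¹ * ‖f‖ := by rw [Real.norm_eq_abs, abs_of_pos (by positivity)]
      _ ≤ c⁻¹ * c := by
          apply mul_le_mul_of_nonneg_left _ (by positivity)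
          rw [hc]; linarith
      _ = 1 := inv_mul_cancel₀ (ne_of_gt hcpos)
  obtain ⟨L, hL⟩ := hconv f1 hf1n
  refine ⟨c * L, ?_⟩
  have : ∀ i, f (v (h i)) = c * f1 (v (h i)) := by
    intro i
    rw [hf1]
    simp only [ContinuousLinearMap.smul_apply, smul_eq_mul]
    field_simp
  simp only [this]
  exact hL.const_mul c

end RosAux

namespace RosAux

variable {X : Type*} [NormedAddCommGroup X] [NormedSpace ℝ X]

theorem l1embeds_of_sep [CompleteSpace X] {y : ℕ → X} (hy : ∀ i, ‖y i‖ ≤ 1)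
    {δ : ℝ} (hδ : 0 < δ)
    (hsep : ∀ (N : ℕ) (a : ℕ → ℝ),
      δ * ∑ i ∈ Finset.range N, |a i| ≤ ‖∑ i ∈ Finset.range N, a i • y i‖) :
    L1Embeds X := by
  classical
  have htr : (0:ℝ) < (1 : ENNReal).toReal := by norm_num
  have hsumnorm : ∀ a : lp (fun _ : ℕ => ℝ) 1, Summable (fun i => ‖a i‖) := by
    intro a
    have := (lp.memℓp a).summable htr
    simpa using this
  have hsum : ∀ a : lp (fun _ : ℕ => ℝ) 1, Summable (fun i => a i • y i) := by
    intro a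
    refine Summable.of_norm_bounded (hsumnorm a) (fun i => ?_)
    rw [norm_smul]
    calc ‖a i‖ * ‖y i‖ ≤ ‖a i‖ * 1 :=
          mul_le_mul_of_nonneg_left (hy i) (norm_nonneg _)
      _ = ‖a i‖ := mul_one _
  have hnorm : ∀ a : lp (fun _ : ℕ => ℝ) 1, HasSum (fun i => ‖a i‖) ‖a‖ := by
    intro a
    have := lp.hasSum_norm htr a
    simpa using this
  set L : lp (fun _ : ℕ => ℝ) 1 →ₗ[ℝ] X :=
    { toFun := fun a => ∑' i, a i • y i
      map_add' := by
        intro a b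
        rw [← Summable.tsum_add (hsum a) (hsum b)]
        apply tsum_congr
        intro i
        have : (↑(a + b) : ∀ _ : ℕ, ℝ) i = a i + b i := by
          rw [lp.coeFn_add]; rfl
        rw [this, add_smul]
      map_smul' := by
        intro c a
        rw [RingHom.id_apply, ← tsum_const_smul'' c]
        apply tsum_congr
        intro i
        have : (↑(c • a) : ∀ _ : ℕ, ℝ) i = c * a i := by
          rw [lp.coeFn_smul]; rfl
        rw [this, mul_smul] } with hL
  have hsumn : ∀ a : lp (fun _ : ℕ => ℝ) 1, Summable (fun i => ‖a i • y i‖) := by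
    intro a
    refine Summable.of_nonneg_of_le (fun i => norm_nonneg _) (fun i => ?_) (hsumnorm a)
    rw [norm_smul]
    calc ‖a i‖ * ‖y i‖ ≤ ‖a i‖ * 1 :=
          mul_le_mul_of_nonneg_left (hy i) (norm_nonneg _)
      _ = ‖a i‖ := mul_one _
  have hbound : ∀ a : lp (fun _ : ℕ => ℝ) 1, ‖L a‖ ≤ 1 * ‖a‖ := by
    intro a
    rw [one_mul]
    calc ‖L a‖ ≤ ∑' i, ‖a i • y i‖ := norm_tsum_le_tsum_norm (hsumn a)
      _ ≤ ∑' i, ‖a i‖ := by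
          refine Summable.tsum_le_tsum (fun i => ?_) (hsumn a) (hsumnorm a)
          rw [norm_smul]
          calc ‖a i‖ * ‖y i‖ ≤ ‖a i‖ * 1 :=
                mul_le_mul_of_nonneg_left (hy i) (norm_nonneg _)
            _ = ‖a i‖ := mul_one _
      _ = ‖a‖ := (hnorm a).tsum_eq
  set Φ : lp (fun _ : ℕ => ℝ) 1 →L[ℝ] X := L.mkContinuous 1 hbound with hΦ
  refine ⟨Φ, δ, hδ, fun a => ?_⟩
  have hpart : Tendsto (fun N => ∑ i ∈ Finset.range N, a i • y i) atTop (𝓝 (Φ a)) := by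
    have : Φ a = ∑' i, a i • y i := rfl
    rw [this]
    exact (hsum a).hasSum.tendsto_sum_nat
  have h1 : Tendsto (fun N => ‖∑ i ∈ Finset.range N, a i • y i‖) atTop (𝓝 ‖Φ a‖) :=
    hpart.norm
  have h2 : Tendsto (fun N => δ * ∑ i ∈ Finset.range N, |a i|) atTop (𝓝 (δ * ‖a‖)) := by
    have h3 : Tendsto (fun N => ∑ i ∈ Finset.range N, ‖a i‖) atTop (𝓝 ‖a‖) :=
      (hnorm a).tendsto_sum_nat
    have h4 : (fun N => ∑ i ∈ Finset.range N, |a i|) =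
        fun N => ∑ i ∈ Finset.range N, ‖a i‖ := by
      funext N
      exact Finset.sum_congr rfl (fun i _ => (Real.norm_eq_abs _).symm)
    exact (h3.const_mul δ).congr (fun N => by simp [Real.norm_eq_abs])
  exact le_of_tendsto_of_tendsto' h2 h1 (fun N => hsep N (fun i => a i))

end RosAux

namespace RosAux

variable {X : Type*} [NormedAddCommGroup X] [NormedSpace ℝ X]

theorem wc_or_l1 [CompleteSpace X] (v : ℕ → X) (hv : ∀ k, ‖v k‖ ≤ 1) :
    (∃ h : ℕ → ℕ, StrictMono h ∧ ∀ f : X →L[ℝ] ℝ, ∃ L,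
      Tendsto (fun i => f (v (h i))) atTop (𝓝 L)) ∨ L1Embeds X := by
  classical
  by_cases hwc : ∃ h : ℕ → ℕ, StrictMono h ∧ ∀ f : X →L[ℝ] ℝ, ∃ L,
      Tendsto (fun i => f (v (h i))) atTop (𝓝 L)
  · exact Or.inl hwc
  right
  have hnwc : ∀ h : ℕ → ℕ, StrictMono h → ∃ f : X →L[ℝ] ℝ,
      ¬ ∃ L, Tendsto (fun i => f (v (h i))) atTop (𝓝 L) := by
    intro h hh
    by_contra hc
    push_neg at hc
    exact hwc ⟨h, hh, fun f => hc f⟩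
  obtain ⟨r, s, hrs, g₀, hg₀, hosc⟩ := step1 v hv hnwc
  set A : ℕ → Set (X →L[ℝ] ℝ) := fun n => {f | ‖f‖ ≤ 1 ∧ f (v n) < r} with hA
  set B : ℕ → Set (X →L[ℝ] ℝ) := fun n => {f | ‖f‖ ≤ 1 ∧ s < f (v n)} with hB
  have hbase : ∀ σ : ℕ → ℕ, StrictMono σ → ∃ f, OscIn A B (g₀ ∘ σ) f := by
    intro σ hσ
    obtain ⟨f, hf1, hfr, hfs⟩ := hosc σ hσ
    refine ⟨f, fun N => ?_, fun N => ?_⟩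
    · obtain ⟨i, hi, hp⟩ := hfr N
      exact ⟨i, hi, hf1, hp⟩
    · obtain ⟨i, hi, hp⟩ := hfs N
      exact ⟨i, hi, hf1, hp⟩
  obtain ⟨nn, hind⟩ := exists_indep hg₀ hbase
  have hδ : (0:ℝ) < (s - r) / 2 := by linarith
  refine l1embeds_of_sep (y := fun i => v (nn i)) (fun i => hv _) hδ ?_
  intro N a
  rcases Nat.eq_zero_or_pos N with rfl | hN
  · simp
  obtain ⟨f, hf⟩ := hind N (fun i => decide (a i < 0))
  obtain ⟨f', hf'⟩ := hind N (fun i => decide (0 ≤ a i))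
  have hmem : ∀ i, i < N →
      (a i < 0 → f ∈ A (nn i) ∧ f' ∈ B (nn i)) ∧
      (0 ≤ a i → f ∈ B (nn i) ∧ f' ∈ A (nn i)) := by
    intro i hi
    have h1 := hf i hi
    have h2 := hf' i hi
    constructor
    · intro hneg
      rw [show (decide (a i < 0)) = true by simp [hneg]] at h1
      rw [show (decide (0 ≤ a i)) = false by simp [hneg, not_le.mpr hneg]] at h2
      exact ⟨h1, h2⟩
    · intro hpos
      rw [show (decide (a i < 0)) = false by simp [not_lt.mpr hpos]] at h1
      rw [show (decide (0 ≤ a i)) = true by simp [hpos]] at h2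
      exact ⟨h1, h2⟩
  have hfn : ‖f‖ ≤ 1 := by
    have := hmem 0 hN
    rcases lt_or_ge (a 0) 0 with h | h
    · exact ((this.1 h).1).1
    · exact ((this.2 h).1).1
  have hfn' : ‖f'‖ ≤ 1 := by
    have := hmem 0 hN
    rcases lt_or_ge (a 0) 0 with h | h
    · exact ((this.1 h).2).1
    · exact ((this.2 h).2).1
  set g : X →L[ℝ] ℝ := f - f' with hg
  have hgnorm : ‖g‖ ≤ 2 := by
    calc ‖f - f'‖ ≤ ‖f‖ + ‖f'‖ := norm_sub_le _ _
      _ ≤ 1 + 1 := add_le_add hfn hfn'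
      _ = 2 := by norm_num
  have hkey : ∀ i, i < N → (s - r) * |a i| ≤ a i * g (v (nn i)) := by
    intro i hi
    have hgi : g (v (nn i)) = f (v (nn i)) - f' (v (nn i)) := rfl
    rcases lt_or_ge (a i) 0 with h | h
    · obtain ⟨hfA, hfB⟩ := (hmem i hi).1 h
      have hglt : g (v (nn i)) ≤ r - s := by
        rw [hgi]
        have := hfA.2
        have := hfB.2
        linarith
      have := mul_le_mul_of_nonpos_left hglt (le_of_lt h)
      rw [abs_of_neg h]
      nlinarith
    · obtain ⟨hfB, hfA⟩ := (hmem i hi).2 h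
      have hggt : s - r ≤ g (v (nn i)) := by
        rw [hgi]
        have := hfA.2
        have := hfB.2
        linarith
      rw [abs_of_nonneg h]
      nlinarith [mul_le_mul_of_nonneg_left hggt h]
  have hsum : (s - r) * ∑ i ∈ Finset.range N, |a i| ≤
      ‖g‖ * ‖∑ i ∈ Finset.range N, a i • v (nn i)‖ := by
    calc (s - r) * ∑ i ∈ Finset.range N, |a i|
        = ∑ i ∈ Finset.range N, (s - r) * |a i| := Finset.mul_sum _ _ _
      _ ≤ ∑ i ∈ Finset.range N, a i * g (v (nn i)) :=
          Finset.sum_le_sum (fun i hi => hkey i (Finset.mem_range.mp hi))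
      _ = g (∑ i ∈ Finset.range N, a i • v (nn i)) := by
          rw [map_sum]
          refine (Finset.sum_congr rfl (fun i _ => ?_)).symm
          rw [map_smul]
          simp [smul_eq_mul]
      _ ≤ |g (∑ i ∈ Finset.range N, a i • v (nn i))| := le_abs_self _
      _ ≤ ‖g‖ * ‖∑ i ∈ Finset.range N, a i • v (nn i)‖ := g.le_opNorm _
  have h2 : ‖g‖ * ‖∑ i ∈ Finset.range N, a i • v (nn i)‖ ≤
      2 * ‖∑ i ∈ Finset.range N, a i • v (nn i)‖ :=
    mul_le_mul_of_nonneg_right hgnorm (norm_nonneg _)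
  nlinarith [Finset.sum_nonneg (fun i (_ : i ∈ Finset.range N) => abs_nonneg (a i))]

end RosAux

namespace RosAux

variable {X : Type*} [NormedAddCommGroup X] [NormedSpace ℝ X]

theorem exists_sep {s : Set X} (hs : ¬ TotallyBounded s) :
    ∃ (u : ℕ → X) (ε : ℝ), 0 < ε ∧ (∀ k, u k ∈ s) ∧
      ∀ j k, j < k → ε ≤ ‖u j - u k‖ := by
  classical
  rw [Metric.totallyBounded_iff] at hs
  push_neg at hs
  obtain ⟨ε, hε, hcov⟩ := hs
  have hF : ∀ l : List X, ∃ z, z ∈ s ∧ ∀ y ∈ l, ε ≤ dist z y := by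
    intro l
    have h1 := hcov ↑l.toFinset (l.toFinset.finite_toSet)
    rw [Set.not_subset] at h1
    obtain ⟨z, hzs, hz⟩ := h1
    refine ⟨z, hzs, fun y hy => ?_⟩
    by_contra hlt
    push_neg at hlt
    exact hz (Set.mem_biUnion (by simpa using hy) (Metric.mem_ball.mpr hlt))
  choose F hFs hFd using hF
  set l : ℕ → List X := fun k =>
    Nat.rec (motive := fun _ => List X) [] (fun _ prev => F prev :: prev) k with hl
  set u : ℕ → X := fun k => F (l k) with hu
  have hmem : ∀ j k, j < k → u j ∈ l k := by
    intro j k hjk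
    induction k with
    | zero => omega
    | succ k ih =>
      rcases Nat.lt_succ_iff_lt_or_eq.mp hjk with h | h
      · exact List.mem_cons_of_mem _ (ih h)
      · rw [h]
        exact List.mem_cons_self
  refine ⟨u, ε, hε, fun k => hFs _, fun j k hjk => ?_⟩
  have := hFd (l k) (u j) (hmem j k hjk)
  rw [dist_comm, dist_eq_norm] at this
  exact this


end RosAux

section Part1Aux

variable {X : Type*} [NormedAddCommGroup X] [NormedSpace ℝ X]

theorem WeaklyNull.subseq {x : ℕ → X} (h : WeaklyNull x) {φ : ℕ → ℕ}
    (hφ : StrictMono φ) : WeaklyNull (fun k => x (φ k)) :=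
  fun f => (h f).comp hφ.tendsto_atTop

theorem WeaklyNull.map {x : ℕ → X} (h : WeaklyNull x) (S : X →L[ℝ] X) :
    WeaklyNull (fun k => S (x k)) :=
  fun f => h (f.comp S)

theorem NormNull.map {x : ℕ → X} (h : NormNull x) (S : X →L[ℝ] X) :
    NormNull (fun k => S (x k)) := by
  refine squeeze_zero (fun k => norm_nonneg _) (fun k => S.le_opNorm (x k)) ?_
  simpa using h.const_mul ‖S‖

theorem key_subseq
    (htrich : ∀ x : ℕ → X, WeaklyNull x →
      NormNull x ∨ AdmitsC0SM x ∨ AdmitsL1SM x)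
    (S T : X →L[ℝ] X)
    (hSc0 : ∀ x : ℕ → X, GeneratesC0SM x → NormNull (fun k => S (x k)))
    (hSl1 : ∀ x : ℕ → X, GeneratesL1SM x → ¬ AdmitsL1SM (fun k => S (x k)))
    (hTc0 : ∀ x : ℕ → X, GeneratesC0SM x → NormNull (fun k => T (x k)))
    (x : ℕ → X) (hx : WeaklyNull x) :
    ∃ φ : ℕ → ℕ, StrictMono φ ∧ NormNull (fun k => T (S (x (φ k)))) := by
  rcases htrich x hx with hn | ⟨φ, hφ, hgen⟩ | ⟨φ, hφ, hgen⟩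
  · exact ⟨id, strictMono_id, (hn.map S).map T⟩
  · exact ⟨φ, hφ, (hSc0 _ hgen).map T⟩
  · set y : ℕ → X := fun k => S (x (φ k)) with hy
    have hywn : WeaklyNull y := (hx.subseq hφ).map S
    rcases htrich y hywn with hn | ⟨ψ, hψ, hgen'⟩ | hL1
    · exact ⟨φ, hφ, hn.map T⟩
    · refine ⟨φ ∘ ψ, hφ.comp hψ, ?_⟩
      exact hTc0 _ hgen'
    · exact absurd hL1 (hSl1 _ hgen)

theorem part1
    (htrich : ∀ x : ℕ → X, WeaklyNull x →
      NormNull x ∨ AdmitsC0SM x ∨ AdmitsL1SM x)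
    (S T : X →L[ℝ] X)
    (hSc0 : ∀ x : ℕ → X, GeneratesC0SM x → NormNull (fun k => S (x k)))
    (hSl1 : ∀ x : ℕ → X, GeneratesL1SM x → ¬ AdmitsL1SM (fun k => S (x k)))
    (hTc0 : ∀ x : ℕ → X, GeneratesC0SM x → NormNull (fun k => T (x k)))
    (x : ℕ → X) (hx : WeaklyNull x) :
    NormNull (fun k => T (S (x k))) := by
  refine tendsto_of_subseq_tendsto (fun ns hns => ?_)
  obtain ⟨ms, hms, hsub⟩ := strictMono_subseq_of_tendsto_atTop hns
  have hwn : WeaklyNull (fun k => x (ns (ms k))) := by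
    intro f
    exact (hx f).comp ((hns.comp hms.tendsto_atTop))
  obtain ⟨φ, hφ, hnull⟩ := key_subseq htrich S T hSc0 hSl1 hTc0 _ hwn
  exact ⟨ms ∘ φ, hnull⟩

end Part1Aux

/-- Abstract form of the compact-squares theorem: if `ℓ₁` does not embed into
`X`, every weakly null sequence is norm null or admits a `c₀` or `ℓ₁`
spreading model, and `S`, `T` both annihilate (in the limit) sequences
generating `c₀` spreading models and destroy `ℓ₁` spreading models, then `TS`
maps weakly null sequences to norm null sequences and is a compact
operator. -/
theorem composition_compact
    [CompleteSpace X]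
    (hl1 : ¬ L1Embeds X)
    (htrich : ∀ x : ℕ → X, WeaklyNull x →
      NormNull x ∨ AdmitsC0SM x ∨ AdmitsL1SM x)
    (S T : X →L[ℝ] X)
    (hSc0 : ∀ x : ℕ → X, GeneratesC0SM x → NormNull (fun k => S (x k)))
    (hSl1 : ∀ x : ℕ → X, GeneratesL1SM x → ¬ AdmitsL1SM (fun k => S (x k)))
    (hTc0 : ∀ x : ℕ → X, GeneratesC0SM x → NormNull (fun k => T (x k)))
    (hTl1 : ∀ x : ℕ → X, GeneratesL1SM x → ¬ AdmitsL1SM (fun k => T (x k))) :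
    (∀ x : ℕ → X, WeaklyNull x → NormNull (fun k => T (S (x k)))) ∧
    IsCompactOperator (fun v => T (S v)) := by
  classical
  have hpart1 : ∀ x : ℕ → X, WeaklyNull x → NormNull (fun k => T (S (x k))) :=
    part1 htrich S T hSc0 hSl1 hTc0
  refine ⟨hpart1, ?_⟩
  have hTB : TotallyBounded ((fun w => T (S w)) '' Metric.closedBall (0 : X) 1) := by
    by_contra hnTB
    obtain ⟨u, ε, hε, humem, husep⟩ := RosAux.exists_sep hnTB
    choose w hwball hweq using humem
    have hweq' : ∀ k, T (S (w k)) = u k := hweq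
    have hwnorm : ∀ k, ‖w k‖ ≤ 1 := by
      intro k
      have := hwball k
      rwa [Metric.mem_closedBall, dist_zero_right] at this
    rcases RosAux.wc_or_l1 w hwnorm with ⟨h, hh, hwc⟩ | hl1'
    · set d : ℕ → X := fun i => w (h (2 * i)) - w (h (2 * i + 1)) with hd
      have he1 : Tendsto (fun i : ℕ => 2 * i) atTop atTop :=
        StrictMono.tendsto_atTop (by intro a b hab; dsimp only; omega)
      have he2 : Tendsto (fun i : ℕ => 2 * i + 1) atTop atTop :=
        StrictMono.tendsto_atTop (by intro a b hab; dsimp only; omega)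
      have hwn : WeaklyNull d := by
        intro f
        obtain ⟨L, hL⟩ := hwc f
        have h1 : Tendsto (fun i : ℕ => f (w (h (2 * i)))) atTop (𝓝 L) := hL.comp he1
        have h2 : Tendsto (fun i : ℕ => f (w (h (2 * i + 1)))) atTop (𝓝 L) := hL.comp he2
        have h3 := h1.sub h2
        rw [sub_self] at h3
        refine h3.congr (fun i => ?_)
        rw [hd]
        simp [map_sub]
      have hnn := hpart1 d hwn
      have hev : ∀ᶠ k in atTop, ‖T (S (d k))‖ < ε :=
        hnn.eventually_lt_const hε
      obtain ⟨k, hk⟩ := hev.exists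
      have himg : T (S (d k)) = u (h (2 * k)) - u (h (2 * k + 1)) := by
        rw [hd]
        simp only [map_sub]
        rw [hweq', hweq']
      have hge : ε ≤ ‖T (S (d k))‖ := by
        rw [himg]
        exact husep _ _ (hh (by omega))
      linarith
    · exact hl1 hl1'
  have hK : IsCompact (closure ((fun w => T (S w)) '' Metric.closedBall (0 : X) 1)) :=
    TotallyBounded.isCompact_of_isClosed hTB.closure isClosed_closure
  refine ⟨_, hK, ?_⟩
  refine Filter.mem_of_superset (Metric.closedBall_mem_nhds (0 : X) one_pos) ?_
  intro z hz
  exact subset_closure ⟨z, hz, rfl⟩
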